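/- Let (B,Φ_B,H,ℓ) be an augmented rack bialgebra over K whose underlying coalgebra B is cocommutative. On the tensor-product coalgebra B⊗H define Φ(b⊗h) := Φ_B(b)h, the products (b⊗h)⊢(b′⊗h′) := Σ ((Φ_B(b)h)⁽¹⁾.b′)⊗((Φ_B(b)h)⁽²⁾h′) and (b⊗h)⊣(b′⊗h′) := b⊗(h·Φ_B(b′)h′), and S(b⊗h) := 1_B⊗S_H(Φ_B(b)h). Then (B⊗H, Δ_{B⊗H}, ε_B⊗ε_H, 1_B⊗1_H, ⊢, ⊣, S) is a cocommutative Hopf dialgebra. Moreover, identifying x ∈ Prim(B) with x⊗1_H and ξ ∈ Prim(H) with 1_B⊗ξ, the Leibniz bracket [u,v] := u⊢v − v⊣u on Prim(B⊗H) = Prim(B)⊕Prim(H) is given by [x+ξ, y+η] = ([x,y] + ξ.y) + ([Φ_B(x),η] + [ξ,η]), where [x,y] = Φ_B(x).y and the brackets in H are commutators. -/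

import Mathlib

open TensorProduct

namespace RackPaper

variable (K : Type*) [CommRing K]
variable (B : Type*) [AddCommGroup B] [Module K B]

/-- Comultiplication of the tensor-product coalgebra `B ⊗ B`. -/
noncomputable def comul2 (comul : B →ₗ[K] B ⊗[K] B) :
    B ⊗[K] B →ₗ[K] (B ⊗[K] B) ⊗[K] (B ⊗[K] B) :=
  (tensorTensorTensorComm K B B B B).toLinearMap ∘ₗ TensorProduct.map comul comul

/-- Counit of the tensor-product coalgebra `B ⊗ B`. -/
noncomputable def counit2 (counit : B →ₗ[K] K) : B ⊗[K] B →ₗ[K] K :=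
  (LinearMap.mul' K K) ∘ₗ TensorProduct.map counit counit

/-- `(B, comul, counit, one)` is a coassociative counital coaugmented coalgebra. -/
structure IsC3Coalgebra (comul : B →ₗ[K] B ⊗[K] B) (counit : B →ₗ[K] K) (one : B) : Prop where
  coassoc : (TensorProduct.assoc K B B B).toLinearMap ∘ₗ
      (TensorProduct.map comul LinearMap.id) ∘ₗ comul
      = (TensorProduct.map LinearMap.id comul) ∘ₗ comul
  counit_comul : (TensorProduct.lid K B).toLinearMap ∘ₗ
      (TensorProduct.map counit LinearMap.id) ∘ₗ comul = LinearMap.id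
  comul_counit : (TensorProduct.rid K B).toLinearMap ∘ₗ
      (TensorProduct.map LinearMap.id counit) ∘ₗ comul = LinearMap.id
  comul_one : comul one = one ⊗ₜ[K] one
  counit_one : counit one = 1

/-- A rack bialgebra structure on the C³-coalgebra `(B, comul, counit, one)`. -/
structure IsRackBialgebra (comul : B →ₗ[K] B ⊗[K] B) (counit : B →ₗ[K] K) (one : B)
    (mul : B ⊗[K] B →ₗ[K] B) : Prop where
  isC3 : IsC3Coalgebra K B comul counit one
  comul_mul : comul ∘ₗ mul = (TensorProduct.map mul mul) ∘ₗ comul2 K B comul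
  counit_mul : counit ∘ₗ mul = counit2 K B counit
  one_mul : ∀ a : B, mul (one ⊗ₜ[K] a) = a
  mul_one : ∀ a : B, mul (a ⊗ₜ[K] one) = counit a • one
  self_distrib : mul ∘ₗ TensorProduct.map LinearMap.id mul
      = mul ∘ₗ TensorProduct.map mul mul ∘ₗ
          (tensorTensorTensorComm K B B B B).toLinearMap ∘ₗ
          TensorProduct.map comul LinearMap.id

/-- A cocommutative Hopf dialgebra `(A, Δ, ε, 1, ⊢, ⊣, S)`: a cocommutative C³-coalgebra
such that `(A, 1, ⊢, ⊣)` is a bar-unital balanced dialgebra, `⊢` and `⊣` are morphisms of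
C³-coalgebras, and `S` is a morphism of C³-coalgebras which is a right antipode for `⊢`
and a left antipode for `⊣`. -/
structure IsHopfDialgebra (comul : B →ₗ[K] B ⊗[K] B) (counit : B →ₗ[K] K) (one : B)
    (vd dv : B ⊗[K] B →ₗ[K] B) (S : B →ₗ[K] B) : Prop where
  isC3 : IsC3Coalgebra K B comul counit one
  cocomm : ∀ x : B, (TensorProduct.comm K B B) (comul x) = comul x
  comul_vd : comul ∘ₗ vd = (TensorProduct.map vd vd) ∘ₗ comul2 K B comul
  counit_vd : counit ∘ₗ vd = counit2 K B counit
  comul_dv : comul ∘ₗ dv = (TensorProduct.map dv dv) ∘ₗ comul2 K B comul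
  counit_dv : counit ∘ₗ dv = counit2 K B counit
  vd_assoc : ∀ a b c : B, vd (vd (a ⊗ₜ[K] b) ⊗ₜ[K] c) = vd (a ⊗ₜ[K] vd (b ⊗ₜ[K] c))
  dv_assoc : ∀ a b c : B, dv (dv (a ⊗ₜ[K] b) ⊗ₜ[K] c) = dv (a ⊗ₜ[K] dv (b ⊗ₜ[K] c))
  di_ax1 : ∀ a b c : B, vd (vd (a ⊗ₜ[K] b) ⊗ₜ[K] c) = vd (dv (a ⊗ₜ[K] b) ⊗ₜ[K] c)
  di_ax2 : ∀ a b c : B, dv (a ⊗ₜ[K] dv (b ⊗ₜ[K] c)) = dv (a ⊗ₜ[K] vd (b ⊗ₜ[K] c))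
  di_ax3 : ∀ a b c : B, dv (vd (a ⊗ₜ[K] b) ⊗ₜ[K] c) = vd (a ⊗ₜ[K] dv (b ⊗ₜ[K] c))
  one_vd : ∀ a : B, vd (one ⊗ₜ[K] a) = a
  dv_one : ∀ a : B, dv (a ⊗ₜ[K] one) = a
  balanced : ∀ a : B, vd (a ⊗ₜ[K] one) = dv (one ⊗ₜ[K] a)
  right_antipode_vd : ∀ a : B,
    vd ((TensorProduct.map LinearMap.id S) (comul a)) = counit a • one
  left_antipode_dv : ∀ a : B,
    dv ((TensorProduct.map S LinearMap.id) (comul a)) = counit a • one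

/-- The rack multiplication `a ▹ b := Σ (a⁽¹⁾ ⊢ b) ⊣ S(a⁽²⁾)` of a Hopf dialgebra. -/
noncomputable def dialgebraRack (comul : B →ₗ[K] B ⊗[K] B)
    (vd dv : B ⊗[K] B →ₗ[K] B) (S : B →ₗ[K] B) : B ⊗[K] B →ₗ[K] B :=
  dv ∘ₗ TensorProduct.map vd S ∘ₗ (TensorProduct.assoc K B B B).symm.toLinearMap ∘ₗ
    TensorProduct.map LinearMap.id (TensorProduct.comm K B B).toLinearMap ∘ₗ
    (TensorProduct.assoc K B B B).toLinearMap ∘ₗ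
    TensorProduct.map comul LinearMap.id

/-- An element `x` is primitive: `Δ(x) = x ⊗ 1 + 1 ⊗ x`. -/
def IsPrimitive (comul : B →ₗ[K] B ⊗[K] B) (one : B) (x : B) : Prop :=
  comul x = x ⊗ₜ[K] one + one ⊗ₜ[K] x

/-- The adjoint representation `h ⊗ h' ↦ ad_h(h') = Σ h⁽¹⁾ h' S(h⁽²⁾)` of a Hopf algebra. -/
noncomputable def adjointMap (H : Type*) [Ring H] [HopfAlgebra K H] :
    H ⊗[K] H →ₗ[K] H :=
  (LinearMap.mul' K H) ∘ₗ
  (TensorProduct.map LinearMap.id (LinearMap.mul' K H)) ∘ₗ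
  (TensorProduct.map LinearMap.id
      (TensorProduct.map LinearMap.id (HopfAlgebra.antipode (R := K)))) ∘ₗ
  (TensorProduct.map LinearMap.id (TensorProduct.comm K H H).toLinearMap) ∘ₗ
  (TensorProduct.assoc K H H H).toLinearMap ∘ₗ
  (TensorProduct.map (Coalgebra.comul) LinearMap.id)

section TensorDialgebra

variable (H : Type*) [Ring H] [HopfAlgebra K H]

/-- The augmentation map `Φ(b ⊗ h) := Φ_B(b) h` on `B ⊗ H`. -/
noncomputable def PhiA (ΦB : B →ₗ[K] H) : B ⊗[K] H →ₗ[K] H :=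
  LinearMap.mul' K H ∘ₗ TensorProduct.map ΦB LinearMap.id

/-- The comultiplication of the tensor-product coalgebra `B ⊗ H`. -/
noncomputable def comulA (comulB : B →ₗ[K] B ⊗[K] B) :
    B ⊗[K] H →ₗ[K] (B ⊗[K] H) ⊗[K] (B ⊗[K] H) :=
  (tensorTensorTensorComm K B B H H).toLinearMap ∘ₗ
    TensorProduct.map comulB (Coalgebra.comul)

/-- The counit of the tensor-product coalgebra `B ⊗ H`. -/
noncomputable def counitA (counitB : B →ₗ[K] K) : B ⊗[K] H →ₗ[K] K :=
  LinearMap.mul' K K ∘ₗ TensorProduct.map counitB (Coalgebra.counit)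

/-- The product `(b ⊗ h) ⊢ (b' ⊗ h') := Σ ((Φ_B(b)h)⁽¹⁾.b') ⊗ ((Φ_B(b)h)⁽²⁾ h')`. -/
noncomputable def vdA (ΦB : B →ₗ[K] H) (ℓ : H ⊗[K] B →ₗ[K] B) :
    (B ⊗[K] H) ⊗[K] (B ⊗[K] H) →ₗ[K] B ⊗[K] H :=
  TensorProduct.map ℓ (LinearMap.mul' K H) ∘ₗ
    (tensorTensorTensorComm K H H B H).toLinearMap ∘ₗ
    TensorProduct.map (Coalgebra.comul) LinearMap.id ∘ₗ
    TensorProduct.map (PhiA K B H ΦB) LinearMap.id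

/-- The product `(b ⊗ h) ⊣ (b' ⊗ h') := b ⊗ (h · Φ_B(b') h')`. -/
noncomputable def dvA (ΦB : B →ₗ[K] H) :
    (B ⊗[K] H) ⊗[K] (B ⊗[K] H) →ₗ[K] B ⊗[K] H :=
  TensorProduct.map LinearMap.id (LinearMap.mul' K H) ∘ₗ
    (TensorProduct.assoc K B H H).toLinearMap ∘ₗ
    TensorProduct.map LinearMap.id (PhiA K B H ΦB)

/-- The antipode `S(b ⊗ h) := 1_B ⊗ S_H(Φ_B(b) h)`. -/
noncomputable def SA (ΦB : B →ₗ[K] H) (oneB : B) : B ⊗[K] H →ₗ[K] B ⊗[K] H :=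
  (TensorProduct.mk K B H oneB) ∘ₗ HopfAlgebra.antipode (R := K) ∘ₗ PhiA K B H ΦB

end TensorDialgebra

set_option synthInstance.maxHeartbeats 1000000
set_option maxHeartbeats 4000000

section Aux
open TensorProduct LinearMap

variable {K : Type u1} [CommRing K]
variable {B : Type u2} [AddCommGroup B] [Module K B]
variable {H : Type u3} [Ring H] [HopfAlgebra K H]

/-- Build a `Coalgebra` instance from `IsC3Coalgebra`. -/
noncomputable def coalgOfC3 (comulB : B →ₗ[K] B ⊗[K] B) (counitB : B →ₗ[K] K) (oneB : B)
    (hB : IsC3Coalgebra K B comulB counitB oneB) : Coalgebra K B where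
  comul := comulB
  counit := counitB
  coassoc := hB.coassoc
  rTensor_counit_comp_comul := by
    refine LinearMap.ext fun b => (TensorProduct.lid K B).injective ?_
    simpa [LinearMap.rTensor] using LinearMap.congr_fun hB.counit_comul b
  lTensor_counit_comp_comul := by
    refine LinearMap.ext fun b => (TensorProduct.rid K B).injective ?_
    simpa [LinearMap.lTensor] using LinearMap.congr_fun hB.comul_counit b
variable {K : Type u1} [CommRing K]
variable {B : Type u2} [AddCommGroup B] [Module K B]
variable {H : Type u3} [Ring H] [HopfAlgebra K H]

/-- The auxiliary action map `(g₁ ⊗ g₂) ⊗ (b ⊗ h) ↦ ℓ(g₁ ⊗ b) ⊗ (g₂ h)`. -/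
noncomputable def actAux (ℓ : H ⊗[K] B →ₗ[K] B) :
    (H ⊗[K] H) ⊗[K] (B ⊗[K] H) →ₗ[K] B ⊗[K] H :=
  TensorProduct.map ℓ (LinearMap.mul' K H) ∘ₗ (tensorTensorTensorComm K H H B H).toLinearMap

lemma actAux_tmul (ℓ : H ⊗[K] B →ₗ[K] B) (g1 g2 : H) (b : B) (h : H) :
    actAux ℓ ((g1 ⊗ₜ[K] g2) ⊗ₜ[K] (b ⊗ₜ[K] h)) = ℓ (g1 ⊗ₜ[K] b) ⊗ₜ[K] (g2 * h) := by
  simp [actAux]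

lemma PhiA_tmul (ΦB : B →ₗ[K] H) (b : B) (h : H) :
    PhiA K B H ΦB (b ⊗ₜ[K] h) = ΦB b * h := by
  simp [PhiA]

lemma vdA_apply (ΦB : B →ₗ[K] H) (ℓ : H ⊗[K] B →ₗ[K] B) (X Y : B ⊗[K] H) :
    vdA K B H ΦB ℓ (X ⊗ₜ[K] Y)
      = actAux ℓ ((Coalgebra.comul (R := K) (PhiA K B H ΦB X)) ⊗ₜ[K] Y) := by
  simp [vdA, actAux]

lemma dvA_apply (ΦB : B →ₗ[K] H) (b : B) (h : H) (Y : B ⊗[K] H) :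
    dvA K B H ΦB ((b ⊗ₜ[K] h) ⊗ₜ[K] Y) = b ⊗ₜ[K] (h * PhiA K B H ΦB Y) := by
  simp [dvA]

lemma dvA_apply' (ΦB : B →ₗ[K] H) (W Y : B ⊗[K] H) :
    dvA K B H ΦB (W ⊗ₜ[K] Y)
      = TensorProduct.map LinearMap.id (LinearMap.mulRight K (PhiA K B H ΦB Y)) W := by
  induction W using TensorProduct.induction_on with
  | zero => simp
  | tmul b h => simp [dvA_apply, LinearMap.mulRight_apply]
  | add u v hu hv => rw [TensorProduct.add_tmul, map_add, hu, hv, map_add]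

lemma SA_apply (ΦB : B →ₗ[K] H) (oneB : B) (X : B ⊗[K] H) :
    SA K B H ΦB oneB X = oneB ⊗ₜ[K] (HopfAlgebra.antipode (R := K) (PhiA K B H ΦB X)) := by
  simp [SA]

lemma counitA_tmul (counitB : B →ₗ[K] K) (b : B) (h : H) :
    counitA K B H counitB (b ⊗ₜ[K] h) = counitB b * Coalgebra.counit (R := K) h := by
  simp [counitA]

lemma comulA_tmul (comulB : B →ₗ[K] B ⊗[K] B) (b : B) (h : H) :
    comulA K B H comulB (b ⊗ₜ[K] h)
      = (tensorTensorTensorComm K B B H H) (comulB b ⊗ₜ[K] Coalgebra.comul (R := K) h) := by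
  simp [comulA]

/-- Sum-of-scalars form of the left counit law. -/
lemma repr_counit_smul {A : Type u4} [AddCommGroup A] [Module K A] [Coalgebra K A]
    {a : A} {ι : Type*} (r : Coalgebra.Repr K a ι) :
    ∑ i ∈ r.index, Coalgebra.counit (R := K) (r.left i) • r.right i = a := by
  have h := Coalgebra.sum_counit_tmul_eq (R := K) r
  have := congrArg (TensorProduct.lid K A) h
  simp only [map_sum, TensorProduct.lid_tmul, one_smul] at this
  exact this

/-- Sum-of-scalars form of the right counit law. -/
lemma repr_smul_counit {A : Type u4} [AddCommGroup A] [Module K A] [Coalgebra K A]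
    {a : A} {ι : Type*} (r : Coalgebra.Repr K a ι) :
    ∑ i ∈ r.index, Coalgebra.counit (R := K) (r.right i) • r.left i = a := by
  have h := Coalgebra.sum_tmul_counit_eq (R := K) r
  have := congrArg (TensorProduct.rid K A) h
  simp only [map_sum, TensorProduct.rid_tmul, one_smul] at this
  exact this

/-- `ε(a) = Σ ε(a⁽¹⁾) ε(a⁽²⁾)`. -/
lemma repr_counit_counit {A : Type u4} [AddCommGroup A] [Module K A] [Coalgebra K A]
    {a : A} {ι : Type*} (r : Coalgebra.Repr K a ι) :
    ∑ i ∈ r.index, Coalgebra.counit (R := K) (r.left i) * Coalgebra.counit (R := K) (r.right i)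
      = Coalgebra.counit (R := K) a := by
  have h := repr_counit_smul r
  have := congrArg (Coalgebra.counit (R := K)) h
  simpa [map_sum, smul_eq_mul] using this
lemma actAux_comul_repr (ℓ : H ⊗[K] B →ₗ[K] B) {g : H} {ι : Type*} (rg : Coalgebra.Repr K g ι)
    (b' : B) (h' : H) :
    actAux ℓ (Coalgebra.comul (R := K) g ⊗ₜ[K] (b' ⊗ₜ[K] h'))
      = ∑ i ∈ rg.index, ℓ (rg.left i ⊗ₜ[K] b') ⊗ₜ[K] (rg.right i * h') := by
  rw [← rg.eq]
  simp [TensorProduct.sum_tmul, map_sum, actAux_tmul]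

lemma actAux_mul (ℓ : H ⊗[K] B →ₗ[K] B)
    (hℓ_mul : ∀ (h h' : H) (b : B), ℓ ((h * h') ⊗ₜ[K] b) = ℓ (h ⊗ₜ[K] ℓ (h' ⊗ₜ[K] b)))
    (u v : H ⊗[K] H) (Y : B ⊗[K] H) :
    actAux ℓ ((u * v) ⊗ₜ[K] Y) = actAux ℓ (u ⊗ₜ[K] actAux ℓ (v ⊗ₜ[K] Y)) := by
  induction u using TensorProduct.induction_on with
  | zero => simp [TensorProduct.zero_tmul]
  | add u1 u2 h1 h2 =>
      simp only [add_mul, TensorProduct.add_tmul, map_add, h1, h2]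
  | tmul g1 g2 =>
    induction v using TensorProduct.induction_on with
    | zero => simp [TensorProduct.zero_tmul]
    | add v1 v2 h1 h2 =>
        simp only [mul_add, TensorProduct.add_tmul, map_add, TensorProduct.tmul_add, h1, h2]
    | tmul k1 k2 =>
      induction Y using TensorProduct.induction_on with
      | zero => simp
      | add Y1 Y2 h1 h2 =>
          simp only [TensorProduct.tmul_add, map_add, h1, h2]
      | tmul b h =>
        rw [Algebra.TensorProduct.tmul_mul_tmul]
        simp [actAux_tmul, hℓ_mul, mul_assoc]

lemma actAux_one (ℓ : H ⊗[K] B →ₗ[K] B)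
    (hℓ_one : ∀ b : B, ℓ ((1 : H) ⊗ₜ[K] b) = b) (Y : B ⊗[K] H) :
    actAux ℓ ((1 : H ⊗[K] H) ⊗ₜ[K] Y) = Y := by
  rw [Algebra.TensorProduct.one_def]
  induction Y using TensorProduct.induction_on with
  | zero => simp
  | add Y1 Y2 h1 h2 => simp only [TensorProduct.tmul_add, map_add, h1, h2]
  | tmul b h => simp [actAux_tmul, hℓ_one]

lemma actAux_oneB (ℓ : H ⊗[K] B →ₗ[K] B) (oneB : B)
    (hℓ_oneB : ∀ h : H, ℓ (h ⊗ₜ[K] oneB) = Coalgebra.counit (R := K) h • oneB)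
    (g k : H) :
    actAux ℓ (Coalgebra.comul (R := K) g ⊗ₜ[K] (oneB ⊗ₜ[K] k)) = oneB ⊗ₜ[K] (g * k) := by
  have rg := Coalgebra.Repr.arbitrary K g
  rw [actAux_comul_repr ℓ rg]
  have : ∀ i ∈ rg.index, ℓ (rg.left i ⊗ₜ[K] oneB) ⊗ₜ[K] (rg.right i * k)
      = oneB ⊗ₜ[K] ((Coalgebra.counit (R := K) (rg.left i) • rg.right i) * k) := by
    intro i _
    rw [hℓ_oneB, TensorProduct.smul_tmul, smul_mul_assoc]
  rw [Finset.sum_congr rfl this, ← TensorProduct.tmul_sum, ← Finset.sum_mul,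
    repr_counit_smul rg]

lemma hSmid (g : H) :
    (LinearMap.lTensor H ((LinearMap.mul' K H ∘ₗ
        LinearMap.rTensor H (HopfAlgebra.antipode (R := K))) ∘ₗ Coalgebra.comul))
      (Coalgebra.comul (R := K) g) = g ⊗ₜ[K] (1 : H) := by
  rw [LinearMap.comp_assoc, HopfAlgebra.mul_antipode_rTensor_comul, LinearMap.lTensor_comp,
    LinearMap.coe_comp, Function.comp_apply, Coalgebra.lTensor_counit_comul]
  simp

lemma antipode_mid (g : H) {ι κ : Type*} (rg : Coalgebra.Repr K g ι)
    (rl : ∀ i : ι, Coalgebra.Repr K (rg.left i) κ) :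
    ∑ i ∈ rg.index, ∑ j ∈ (rl i).index,
        (rl i).left j ⊗ₜ[K]
          ((HopfAlgebra.antipode (R := K) ((rl i).right j)) * rg.right i)
      = g ⊗ₜ[K] (1 : H) := by
  set S : H →ₗ[K] H := HopfAlgebra.antipode (R := K)
  set G : (H ⊗[K] H) ⊗[K] H →ₗ[K] H ⊗[K] H :=
    TensorProduct.map LinearMap.id (LinearMap.mul' K H) ∘ₗ
      (TensorProduct.assoc K H H H).toLinearMap ∘ₗ
      LinearMap.rTensor H (LinearMap.lTensor H S) with hG
  have hGpure : ∀ (x y z : H), G ((x ⊗ₜ[K] y) ⊗ₜ[K] z) = x ⊗ₜ[K] (S y * z) := by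
    intro x y z; simp [hG]
  have step1 : ∑ i ∈ rg.index, ∑ j ∈ (rl i).index,
      (rl i).left j ⊗ₜ[K] (S ((rl i).right j) * rg.right i)
      = G ((LinearMap.rTensor H (Coalgebra.comul (R := K))) (Coalgebra.comul (R := K) g)) := by
    rw [← rg.eq, map_sum, map_sum]
    refine Finset.sum_congr rfl fun i _ => ?_
    rw [LinearMap.rTensor_tmul, ← (rl i).eq, TensorProduct.sum_tmul, map_sum]
    exact Finset.sum_congr rfl fun j _ => (hGpure _ _ _).symm
  have step2 : (LinearMap.rTensor H (Coalgebra.comul (R := K))) (Coalgebra.comul (R := K) g)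
      = (TensorProduct.assoc K H H H).symm
          ((LinearMap.lTensor H (Coalgebra.comul (R := K))) (Coalgebra.comul (R := K) g)) :=
    (Coalgebra.coassoc_symm_apply g).symm
  have step3 : ∀ w : H ⊗[K] (H ⊗[K] H),
      G ((TensorProduct.assoc K H H H).symm w)
        = (LinearMap.lTensor H (LinearMap.mul' K H ∘ₗ LinearMap.rTensor H S)) w := by
    intro w
    induction w using TensorProduct.induction_on with
    | zero => simp
    | add w1 w2 h1 h2 => simp only [map_add, h1, h2]
    | tmul x w' =>
      induction w' using TensorProduct.induction_on with
      | zero => simp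
      | add w1 w2 h1 h2 =>
          simp only [TensorProduct.tmul_add, map_add, h1, h2]
      | tmul u v => simp [hGpure]
  rw [step1, step2, step3, ← LinearMap.comp_apply, ← LinearMap.lTensor_comp]
  exact hSmid g
lemma adjointMap_tmul (g k : H) {ι : Type*} (rg : Coalgebra.Repr K g ι) :
    adjointMap K H (g ⊗ₜ[K] k)
      = ∑ i ∈ rg.index, rg.left i * (k * HopfAlgebra.antipode (R := K) (rg.right i)) := by
  rw [adjointMap]
  simp only [LinearMap.coe_comp, Function.comp_apply, LinearEquiv.coe_coe,
    TensorProduct.map_tmul, LinearMap.id_coe, id_eq]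
  rw [← rg.eq, TensorProduct.sum_tmul, map_sum, map_sum, map_sum, map_sum, map_sum]
  refine Finset.sum_congr rfl fun i _ => ?_
  simp

lemma Phi_act (ΦB : B →ₗ[K] H) (ℓ : H ⊗[K] B →ₗ[K] B)
    (hΦ_equiv : ΦB ∘ₗ ℓ = adjointMap K H ∘ₗ TensorProduct.map LinearMap.id ΦB)
    (g : H) (b' : B) (h' : H) :
    PhiA K B H ΦB (actAux ℓ (Coalgebra.comul (R := K) g ⊗ₜ[K] (b' ⊗ₜ[K] h')))
      = g * (ΦB b' * h') := by
  classical
  set S : H →ₗ[K] H := HopfAlgebra.antipode (R := K) with hS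
  have rg := Coalgebra.Repr.arbitrary K g
  have rl : ∀ i : H × H, Coalgebra.Repr K (rg.left i) (H × H) := fun i =>
    Coalgebra.Repr.arbitrary K (rg.left i)
  set k : H := ΦB b' with hk
  have hΦℓ : ∀ (x : H) (b : B), ΦB (ℓ (x ⊗ₜ[K] b)) = adjointMap K H (x ⊗ₜ[K] ΦB b) := by
    intro x b
    simpa using LinearMap.congr_fun hΦ_equiv (x ⊗ₜ[K] b)
  rw [actAux_comul_repr ℓ rg, map_sum]
  have hterm : ∀ i ∈ rg.index,
      PhiA K B H ΦB (ℓ (rg.left i ⊗ₜ[K] b') ⊗ₜ[K] (rg.right i * h'))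
        = ∑ j ∈ (rl i).index,
            (rl i).left j * (k * (S ((rl i).right j) * (rg.right i * h'))) := by
    intro i _
    rw [PhiA_tmul, hΦℓ, adjointMap_tmul _ _ (rl i), Finset.sum_mul]
    exact Finset.sum_congr rfl fun j _ => by rw [← hS, ← hk]; simp [mul_assoc]
  rw [Finset.sum_congr rfl hterm]
  set F : H ⊗[K] H →ₗ[K] H :=
    LinearMap.mul' K H ∘ₗ
      LinearMap.lTensor H (LinearMap.mulLeft K k ∘ₗ LinearMap.mulRight K h') with hF
  have hFpure : ∀ x y : H, F (x ⊗ₜ[K] y) = x * (k * (y * h')) := by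
    intro x y; simp [hF]
  have key := congrArg F (antipode_mid g rg rl)
  rw [map_sum] at key
  simp only [map_sum, hFpure] at key
  calc ∑ i ∈ rg.index, ∑ j ∈ (rl i).index,
        (rl i).left j * (k * (S ((rl i).right j) * (rg.right i * h')))
      = ∑ i ∈ rg.index, ∑ j ∈ (rl i).index,
        (rl i).left j * (k * ((S ((rl i).right j) * rg.right i) * h')) := by
        refine Finset.sum_congr rfl fun i _ => Finset.sum_congr rfl fun j _ => ?_
        rw [mul_assoc]
    _ = F (g ⊗ₜ[K] (1 : H)) := key
    _ = g * (ΦB b' * h') := by rw [hFpure, ← hk, one_mul]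

lemma Phi_act' (ΦB : B →ₗ[K] H) (ℓ : H ⊗[K] B →ₗ[K] B)
    (hΦ_equiv : ΦB ∘ₗ ℓ = adjointMap K H ∘ₗ TensorProduct.map LinearMap.id ΦB)
    (g : H) (Y : B ⊗[K] H) :
    PhiA K B H ΦB (actAux ℓ (Coalgebra.comul (R := K) g ⊗ₜ[K] Y))
      = g * PhiA K B H ΦB Y := by
  induction Y using TensorProduct.induction_on with
  | zero => simp
  | add Y1 Y2 h1 h2 => simp only [TensorProduct.tmul_add, map_add, h1, h2, mul_add]
  | tmul b' h' => rw [Phi_act ΦB ℓ hΦ_equiv, PhiA_tmul]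

lemma Phi_vd (ΦB : B →ₗ[K] H) (ℓ : H ⊗[K] B →ₗ[K] B)
    (hΦ_equiv : ΦB ∘ₗ ℓ = adjointMap K H ∘ₗ TensorProduct.map LinearMap.id ΦB)
    (X Y : B ⊗[K] H) :
    PhiA K B H ΦB (vdA K B H ΦB ℓ (X ⊗ₜ[K] Y))
      = PhiA K B H ΦB X * PhiA K B H ΦB Y := by
  rw [vdA_apply, Phi_act' ΦB ℓ hΦ_equiv]

lemma Phi_dv (ΦB : B →ₗ[K] H) (X Y : B ⊗[K] H) :
    PhiA K B H ΦB (dvA K B H ΦB (X ⊗ₜ[K] Y))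
      = PhiA K B H ΦB X * PhiA K B H ΦB Y := by
  induction X using TensorProduct.induction_on with
  | zero => simp [TensorProduct.zero_tmul]
  | add X1 X2 h1 h2 =>
      simp only [TensorProduct.add_tmul, map_add, h1, h2, add_mul]
  | tmul b h => rw [dvA_apply, PhiA_tmul, PhiA_tmul, mul_assoc]
lemma mapPhiPhi_ttt (ΦB : B →ₗ[K] H) (u : B ⊗[K] B) (v : H ⊗[K] H) :
    TensorProduct.map (PhiA K B H ΦB) (PhiA K B H ΦB)
        ((tensorTensorTensorComm K B B H H) (u ⊗ₜ[K] v))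
      = (TensorProduct.map ΦB ΦB u) * v := by
  induction u using TensorProduct.induction_on with
  | zero => simp [TensorProduct.zero_tmul]
  | add u1 u2 h1 h2 => simp only [TensorProduct.add_tmul, map_add, h1, h2, add_mul]
  | tmul b1 b2 =>
    induction v using TensorProduct.induction_on with
    | zero => simp
    | add v1 v2 h1 h2 => simp only [TensorProduct.tmul_add, map_add, h1, h2, mul_add]
    | tmul h1 h2 =>
      simp [PhiA_tmul, Algebra.TensorProduct.tmul_mul_tmul]

lemma Phi_comulA (comulB : B →ₗ[K] B ⊗[K] B) (ΦB : B →ₗ[K] H)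
    (hΦ_comul : Coalgebra.comul ∘ₗ ΦB = TensorProduct.map ΦB ΦB ∘ₗ comulB)
    (X : B ⊗[K] H) :
    Coalgebra.comul (R := K) (PhiA K B H ΦB X)
      = TensorProduct.map (PhiA K B H ΦB) (PhiA K B H ΦB) (comulA K B H comulB X) := by
  induction X using TensorProduct.induction_on with
  | zero => simp
  | add X1 X2 h1 h2 => simp only [map_add, h1, h2]
  | tmul b h =>
    have hb := LinearMap.congr_fun hΦ_comul b
    simp only [LinearMap.coe_comp, Function.comp_apply] at hb
    rw [PhiA_tmul, Bialgebra.comul_mul, comulA_tmul, mapPhiPhi_ttt, hb]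

lemma Phi_counitA (counitB : B →ₗ[K] K) (ΦB : B →ₗ[K] H)
    (hΦ_counit : Coalgebra.counit ∘ₗ ΦB = counitB)
    (X : B ⊗[K] H) :
    Coalgebra.counit (R := K) (PhiA K B H ΦB X) = counitA K B H counitB X := by
  induction X using TensorProduct.induction_on with
  | zero => simp
  | add X1 X2 h1 h2 => simp only [map_add, h1, h2]
  | tmul b h =>
    have hb := LinearMap.congr_fun hΦ_counit b
    simp only [LinearMap.coe_comp, Function.comp_apply] at hb
    rw [PhiA_tmul, Bialgebra.counit_mul, counitA_tmul, hb]

lemma PhiA_one (ΦB : B →ₗ[K] H) (oneB : B) (hΦ_one : ΦB oneB = 1) :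
    PhiA K B H ΦB (oneB ⊗ₜ[K] (1 : H)) = 1 := by
  rw [PhiA_tmul, hΦ_one, one_mul]

lemma mulRight_map_comp (k k' : H) (W : B ⊗[K] H) :
    TensorProduct.map LinearMap.id (LinearMap.mulRight K k)
        (TensorProduct.map LinearMap.id (LinearMap.mulRight K k') W)
      = TensorProduct.map LinearMap.id (LinearMap.mulRight K (k' * k)) W := by
  induction W using TensorProduct.induction_on with
  | zero => simp
  | add u v hu hv => simp only [map_add, hu, hv]
  | tmul b h => simp [mul_assoc]

lemma act_mulRight (ℓ : H ⊗[K] B →ₗ[K] B) (k : H) (u : H ⊗[K] H) (Y : B ⊗[K] H) :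
    TensorProduct.map LinearMap.id (LinearMap.mulRight K k) (actAux ℓ (u ⊗ₜ[K] Y))
      = actAux ℓ (u ⊗ₜ[K] TensorProduct.map LinearMap.id (LinearMap.mulRight K k) Y) := by
  induction u using TensorProduct.induction_on with
  | zero => simp [TensorProduct.zero_tmul]
  | add u1 u2 h1 h2 => simp only [TensorProduct.add_tmul, map_add, h1, h2]
  | tmul g1 g2 =>
    induction Y using TensorProduct.induction_on with
    | zero => simp
    | add Y1 Y2 h1 h2 => simp only [TensorProduct.tmul_add, map_add, h1, h2]
    | tmul b h => simp [actAux_tmul, mul_assoc]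

lemma comm_ttt (u : B ⊗[K] B) (v : H ⊗[K] H) :
    (TensorProduct.comm K (B ⊗[K] H) (B ⊗[K] H))
        ((tensorTensorTensorComm K B B H H) (u ⊗ₜ[K] v))
      = (tensorTensorTensorComm K B B H H)
          ((TensorProduct.comm K B B u) ⊗ₜ[K] (TensorProduct.comm K H H v)) := by
  induction u using TensorProduct.induction_on with
  | zero => simp [TensorProduct.zero_tmul]
  | add u1 u2 h1 h2 => simp only [TensorProduct.add_tmul, map_add, h1, h2]
  | tmul b1 b2 =>
    induction v using TensorProduct.induction_on with
    | zero => simp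
    | add v1 v2 h1 h2 => simp only [TensorProduct.tmul_add, map_add, h1, h2]
    | tmul h1 h2 => simp
lemma comulA_repr [Coalgebra K B] {b : B} {h : H} {ι κ : Type*}
    (rb : Coalgebra.Repr K b ι) (rh : Coalgebra.Repr K h κ) :
    comulA K B H (Coalgebra.comul (R := K)) (b ⊗ₜ[K] h)
      = ∑ i ∈ rb.index, ∑ j ∈ rh.index,
          (rb.left i ⊗ₜ[K] rh.left j) ⊗ₜ[K] (rb.right i ⊗ₜ[K] rh.right j) := by
  rw [comulA_tmul, ← rb.eq, ← rh.eq]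
  simp only [TensorProduct.sum_tmul, TensorProduct.tmul_sum, map_sum,
    tensorTensorTensorComm_tmul]
  rw [Finset.sum_comm]

lemma isC3A [Coalgebra K B] (oneB : B)
    (h_comul_oneB : Coalgebra.comul (R := K) oneB = oneB ⊗ₜ[K] oneB)
    (h_counit_oneB : Coalgebra.counit (R := K) oneB = 1) :
    IsC3Coalgebra K (B ⊗[K] H) (comulA K B H (Coalgebra.comul (R := K)))
      (counitA K B H (Coalgebra.counit (R := K))) (oneB ⊗ₜ[K] (1 : H)) := by
  classical
  constructor
  · -- coassoc
    refine TensorProduct.ext' fun b h => ?_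
    simp only [LinearMap.coe_comp, Function.comp_apply, LinearEquiv.coe_coe]
    set ΔA := comulA K B H (Coalgebra.comul (R := K)) with hΔA
    have rb := Coalgebra.Repr.arbitrary K b
    have rh := Coalgebra.Repr.arbitrary K h
    have rbL : ∀ i : B × B, Coalgebra.Repr K (rb.left i) (B × B) := fun i =>
      Coalgebra.Repr.arbitrary K (rb.left i)
    have rbR : ∀ i : B × B, Coalgebra.Repr K (rb.right i) (B × B) := fun i =>
      Coalgebra.Repr.arbitrary K (rb.right i)
    have rhL : ∀ j : H × H, Coalgebra.Repr K (rh.left j) (H × H) := fun j =>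
      Coalgebra.Repr.arbitrary K (rh.left j)
    have rhR : ∀ j : H × H, Coalgebra.Repr K (rh.right j) (H × H) := fun j =>
      Coalgebra.Repr.arbitrary K (rh.right j)
    set Ψ : (B ⊗[K] (B ⊗[K] B)) ⊗[K] (H ⊗[K] (H ⊗[K] H)) →ₗ[K]
        (B ⊗[K] H) ⊗[K] ((B ⊗[K] H) ⊗[K] (B ⊗[K] H)) :=
      TensorProduct.map LinearMap.id (tensorTensorTensorComm K B B H H).toLinearMap ∘ₗ
        (tensorTensorTensorComm K B (B ⊗[K] B) H (H ⊗[K] H)).toLinearMap with hΨ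
    have hΨpure : ∀ (b1 b2 b3 : B) (h1 h2 h3 : H),
        Ψ ((b1 ⊗ₜ[K] (b2 ⊗ₜ[K] b3)) ⊗ₜ[K] (h1 ⊗ₜ[K] (h2 ⊗ₜ[K] h3)))
          = (b1 ⊗ₜ[K] h1) ⊗ₜ[K] ((b2 ⊗ₜ[K] h2) ⊗ₜ[K] (b3 ⊗ₜ[K] h3)) := by
      intro b1 b2 b3 h1 h2 h3; simp [hΨ]
    have hL : (TensorProduct.assoc K (B ⊗[K] H) (B ⊗[K] H) (B ⊗[K] H))
        ((TensorProduct.map ΔA LinearMap.id) (ΔA (b ⊗ₜ[K] h)))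
        = ∑ i ∈ rb.index, ∑ j ∈ rh.index, ∑ k ∈ (rbL i).index, ∑ l ∈ (rhL j).index,
            ((rbL i).left k ⊗ₜ[K] (rhL j).left l) ⊗ₜ[K]
              (((rbL i).right k ⊗ₜ[K] (rhL j).right l) ⊗ₜ[K]
                (rb.right i ⊗ₜ[K] rh.right j)) := by
      rw [hΔA, comulA_repr rb rh]
      simp only [map_sum]
      refine Finset.sum_congr rfl fun i _ => Finset.sum_congr rfl fun j _ => ?_
      rw [TensorProduct.map_tmul, LinearMap.id_coe, id_eq, ← hΔA, hΔA,
        comulA_repr (rbL i) (rhL j)]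
      simp only [TensorProduct.sum_tmul, map_sum]
      refine Finset.sum_congr rfl fun k _ => Finset.sum_congr rfl fun l _ => ?_
      simp
    have hR : (TensorProduct.map LinearMap.id ΔA) (ΔA (b ⊗ₜ[K] h))
        = ∑ i ∈ rb.index, ∑ j ∈ rh.index, ∑ k ∈ (rbR i).index, ∑ l ∈ (rhR j).index,
            (rb.left i ⊗ₜ[K] rh.left j) ⊗ₜ[K]
              (((rbR i).left k ⊗ₜ[K] (rhR j).left l) ⊗ₜ[K]
                ((rbR i).right k ⊗ₜ[K] (rhR j).right l)) := by
      rw [hΔA, comulA_repr rb rh]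
      simp only [map_sum]
      refine Finset.sum_congr rfl fun i _ => Finset.sum_congr rfl fun j _ => ?_
      rw [TensorProduct.map_tmul, LinearMap.id_coe, id_eq, ← hΔA, hΔA,
        comulA_repr (rbR i) (rhR j)]
      simp only [TensorProduct.tmul_sum]
    have hXL := Coalgebra.sum_tmul_tmul_eq rb rbL rbR
    have hYL := Coalgebra.sum_tmul_tmul_eq rh rhL rhR
    have hLΨ : ∑ i ∈ rb.index, ∑ j ∈ rh.index, ∑ k ∈ (rbL i).index, ∑ l ∈ (rhL j).index,
            ((rbL i).left k ⊗ₜ[K] (rhL j).left l) ⊗ₜ[K]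
              (((rbL i).right k ⊗ₜ[K] (rhL j).right l) ⊗ₜ[K]
                (rb.right i ⊗ₜ[K] rh.right j))
        = Ψ ((∑ i ∈ rb.index, ∑ k ∈ (rbL i).index,
              (rbL i).left k ⊗ₜ[K] ((rbL i).right k ⊗ₜ[K] rb.right i)) ⊗ₜ[K]
             (∑ j ∈ rh.index, ∑ l ∈ (rhL j).index,
              (rhL j).left l ⊗ₜ[K] ((rhL j).right l ⊗ₜ[K] rh.right j))) := by
      have expand : Ψ ((∑ i ∈ rb.index, ∑ k ∈ (rbL i).index,
              (rbL i).left k ⊗ₜ[K] ((rbL i).right k ⊗ₜ[K] rb.right i)) ⊗ₜ[K]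
             (∑ j ∈ rh.index, ∑ l ∈ (rhL j).index,
              (rhL j).left l ⊗ₜ[K] ((rhL j).right l ⊗ₜ[K] rh.right j)))
          = ∑ i ∈ rb.index, ∑ k ∈ (rbL i).index, ∑ j ∈ rh.index, ∑ l ∈ (rhL j).index,
            ((rbL i).left k ⊗ₜ[K] (rhL j).left l) ⊗ₜ[K]
              (((rbL i).right k ⊗ₜ[K] (rhL j).right l) ⊗ₜ[K]
                (rb.right i ⊗ₜ[K] rh.right j)) := by
        rw [TensorProduct.sum_tmul, map_sum]
        refine Finset.sum_congr rfl fun i _ => ?_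
        rw [TensorProduct.sum_tmul, map_sum]
        refine Finset.sum_congr rfl fun k _ => ?_
        rw [TensorProduct.tmul_sum, map_sum]
        refine Finset.sum_congr rfl fun j _ => ?_
        rw [TensorProduct.tmul_sum, map_sum]
        refine Finset.sum_congr rfl fun l _ => ?_
        exact hΨpure _ _ _ _ _ _
      rw [expand]
      exact Finset.sum_congr rfl fun i _ => Finset.sum_comm
    have hRΨ : ∑ i ∈ rb.index, ∑ j ∈ rh.index, ∑ k ∈ (rbR i).index, ∑ l ∈ (rhR j).index,
            (rb.left i ⊗ₜ[K] rh.left j) ⊗ₜ[K]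
              (((rbR i).left k ⊗ₜ[K] (rhR j).left l) ⊗ₜ[K]
                ((rbR i).right k ⊗ₜ[K] (rhR j).right l))
        = Ψ ((∑ i ∈ rb.index, ∑ k ∈ (rbR i).index,
              rb.left i ⊗ₜ[K] ((rbR i).left k ⊗ₜ[K] (rbR i).right k)) ⊗ₜ[K]
             (∑ j ∈ rh.index, ∑ l ∈ (rhR j).index,
              rh.left j ⊗ₜ[K] ((rhR j).left l ⊗ₜ[K] (rhR j).right l))) := by
      have expand : Ψ ((∑ i ∈ rb.index, ∑ k ∈ (rbR i).index,
              rb.left i ⊗ₜ[K] ((rbR i).left k ⊗ₜ[K] (rbR i).right k)) ⊗ₜ[K]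
             (∑ j ∈ rh.index, ∑ l ∈ (rhR j).index,
              rh.left j ⊗ₜ[K] ((rhR j).left l ⊗ₜ[K] (rhR j).right l)))
          = ∑ i ∈ rb.index, ∑ k ∈ (rbR i).index, ∑ j ∈ rh.index, ∑ l ∈ (rhR j).index,
            (rb.left i ⊗ₜ[K] rh.left j) ⊗ₜ[K]
              (((rbR i).left k ⊗ₜ[K] (rhR j).left l) ⊗ₜ[K]
                ((rbR i).right k ⊗ₜ[K] (rhR j).right l)) := by
        rw [TensorProduct.sum_tmul, map_sum]
        refine Finset.sum_congr rfl fun i _ => ?_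
        rw [TensorProduct.sum_tmul, map_sum]
        refine Finset.sum_congr rfl fun k _ => ?_
        rw [TensorProduct.tmul_sum, map_sum]
        refine Finset.sum_congr rfl fun j _ => ?_
        rw [TensorProduct.tmul_sum, map_sum]
        refine Finset.sum_congr rfl fun l _ => ?_
        exact hΨpure _ _ _ _ _ _
      rw [expand]
      exact Finset.sum_congr rfl fun i _ => Finset.sum_comm
    rw [hL, hR, hLΨ, hRΨ, hXL, hYL]
  · -- counit_comul
    refine TensorProduct.ext' fun b h => ?_
    simp only [LinearMap.coe_comp, Function.comp_apply, LinearEquiv.coe_coe, LinearMap.id_coe,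
      id_eq]
    have rb := Coalgebra.Repr.arbitrary K b
    have rh := Coalgebra.Repr.arbitrary K h
    rw [comulA_repr rb rh]
    simp only [map_sum, TensorProduct.map_tmul, LinearMap.id_coe, id_eq, counitA_tmul,
      TensorProduct.lid_tmul]
    have : ∀ i ∈ rb.index, ∀ j ∈ rh.index,
        (Coalgebra.counit (R := K) (rb.left i) * Coalgebra.counit (R := K) (rh.left j)) •
            (rb.right i ⊗ₜ[K] rh.right j)
          = (Coalgebra.counit (R := K) (rb.left i) • rb.right i) ⊗ₜ[K]
              (Coalgebra.counit (R := K) (rh.left j) • rh.right j) := by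
      intro i _ j _
      rw [mul_smul, ← TensorProduct.smul_tmul', TensorProduct.tmul_smul]
    rw [Finset.sum_congr rfl fun i hi => Finset.sum_congr rfl fun j hj => this i hi j hj]
    rw [Finset.sum_congr rfl fun i (_ : i ∈ rb.index) =>
      (TensorProduct.tmul_sum _ _ _).symm, ← TensorProduct.sum_tmul,
      repr_counit_smul rb, repr_counit_smul rh]
  · -- comul_counit
    refine TensorProduct.ext' fun b h => ?_
    simp only [LinearMap.coe_comp, Function.comp_apply, LinearEquiv.coe_coe, LinearMap.id_coe,
      id_eq]
    have rb := Coalgebra.Repr.arbitrary K b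
    have rh := Coalgebra.Repr.arbitrary K h
    rw [comulA_repr rb rh]
    simp only [map_sum, TensorProduct.map_tmul, LinearMap.id_coe, id_eq, counitA_tmul,
      TensorProduct.rid_tmul]
    have : ∀ i ∈ rb.index, ∀ j ∈ rh.index,
        (Coalgebra.counit (R := K) (rb.right i) * Coalgebra.counit (R := K) (rh.right j)) •
            (rb.left i ⊗ₜ[K] rh.left j)
          = (Coalgebra.counit (R := K) (rb.right i) • rb.left i) ⊗ₜ[K]
              (Coalgebra.counit (R := K) (rh.right j) • rh.left j) := by
      intro i _ j _
      rw [mul_smul, ← TensorProduct.smul_tmul', TensorProduct.tmul_smul]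
    rw [Finset.sum_congr rfl fun i hi => Finset.sum_congr rfl fun j hj => this i hi j hj]
    rw [Finset.sum_congr rfl fun i (_ : i ∈ rb.index) =>
      (TensorProduct.tmul_sum _ _ _).symm, ← TensorProduct.sum_tmul,
      repr_smul_counit rb, repr_smul_counit rh]
  · -- comul_one
    rw [comulA_tmul, h_comul_oneB, Bialgebra.comul_one, Algebra.TensorProduct.one_def]
    simp
  · -- counit_one
    rw [counitA_tmul, h_counit_oneB, Bialgebra.counit_one, one_mul]
lemma cocommA [Coalgebra K B]
    (cocommB : ∀ u : B, (TensorProduct.comm K B B) (Coalgebra.comul u) = Coalgebra.comul u)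
    (cocommH : ∀ u : H, (TensorProduct.comm K H H) (Coalgebra.comul u)
      = Coalgebra.comul (R := K) u)
    (X : B ⊗[K] H) :
    (TensorProduct.comm K (B ⊗[K] H) (B ⊗[K] H))
        (comulA K B H (Coalgebra.comul (R := K)) X)
      = comulA K B H (Coalgebra.comul (R := K)) X := by
  induction X using TensorProduct.induction_on with
  | zero => simp
  | add X1 X2 h1 h2 => simp only [map_add, h1, h2]
  | tmul b h => rw [comulA_tmul, comm_ttt, cocommB, cocommH]

lemma dv_ttt (ΦB : B →ₗ[K] H) (u u' : B ⊗[K] B) (v v' : H ⊗[K] H) :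
    TensorProduct.map (dvA K B H ΦB) (dvA K B H ΦB)
        ((tensorTensorTensorComm K (B ⊗[K] H) (B ⊗[K] H) (B ⊗[K] H) (B ⊗[K] H))
          (((tensorTensorTensorComm K B B H H) (u ⊗ₜ[K] v)) ⊗ₜ[K]
            ((tensorTensorTensorComm K B B H H) (u' ⊗ₜ[K] v'))))
      = (tensorTensorTensorComm K B B H H)
          (u ⊗ₜ[K] (v * TensorProduct.map ΦB ΦB u' * v')) := by
  induction u using TensorProduct.induction_on with
  | zero => simp [TensorProduct.zero_tmul]
  | add u1 u2 h1 h2 =>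
      simp only [TensorProduct.add_tmul, map_add, h1, h2]
  | tmul b1 b2 =>
    induction v using TensorProduct.induction_on with
    | zero => simp [TensorProduct.zero_tmul]
    | add v1 v2 h1 h2 =>
        simp only [TensorProduct.tmul_add, TensorProduct.add_tmul, map_add, add_mul,
          h1, h2]
    | tmul x1 x2 =>
      induction u' using TensorProduct.induction_on with
      | zero => simp [TensorProduct.zero_tmul]
      | add w1 w2 h1 h2 =>
          simp only [TensorProduct.add_tmul, map_add, mul_add, add_mul,
            TensorProduct.tmul_add, h1, h2]
      | tmul b1' b2' =>
        induction v' using TensorProduct.induction_on with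
        | zero => simp
        | add z1 z2 h1 h2 =>
            simp only [TensorProduct.tmul_add, map_add, mul_add, h1, h2]
        | tmul y1 y2 =>
          simp only [tensorTensorTensorComm_tmul, TensorProduct.map_tmul,
            Algebra.TensorProduct.tmul_mul_tmul]
          rw [dvA_apply, dvA_apply, PhiA_tmul, PhiA_tmul]
          simp [mul_assoc]

lemma comul_dvA [Coalgebra K B] (ΦB : B →ₗ[K] H)
    (hΦ_comul : Coalgebra.comul ∘ₗ ΦB
      = TensorProduct.map ΦB ΦB ∘ₗ (Coalgebra.comul (R := K) (A := B))) :
    comulA K B H (Coalgebra.comul (R := K)) ∘ₗ dvA K B H ΦB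
      = TensorProduct.map (dvA K B H ΦB) (dvA K B H ΦB) ∘ₗ
          comul2 K (B ⊗[K] H) (comulA K B H (Coalgebra.comul (R := K))) := by
  refine TensorProduct.ext' fun X Y => ?_
  simp only [LinearMap.coe_comp, Function.comp_apply, comul2, LinearEquiv.coe_coe,
    TensorProduct.map_tmul]
  induction X using TensorProduct.induction_on with
  | zero => simp [TensorProduct.zero_tmul]
  | add X1 X2 h1 h2 =>
      simp only [TensorProduct.add_tmul, map_add, h1, h2]
  | tmul b h =>
    induction Y using TensorProduct.induction_on with
    | zero => simp
    | add Y1 Y2 h1 h2 =>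
        simp only [TensorProduct.tmul_add, map_add, h1, h2]
    | tmul b' h' =>
      have hb' := LinearMap.congr_fun hΦ_comul b'
      simp only [LinearMap.coe_comp, Function.comp_apply] at hb'
      rw [dvA_apply, PhiA_tmul, comulA_tmul, comulA_tmul, comulA_tmul,
        Bialgebra.comul_mul, Bialgebra.comul_mul, hb', dv_ttt]
      rw [mul_assoc]

lemma counit_act [Coalgebra K B] (counitB : B →ₗ[K] K) (ℓ : H ⊗[K] B →ₗ[K] B)
    (hℓ_counit : counitB ∘ₗ ℓ
      = LinearMap.mul' K K ∘ₗ TensorProduct.map Coalgebra.counit counitB)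
    (g : H) (Y : B ⊗[K] H) :
    counitA K B H counitB (actAux ℓ (Coalgebra.comul (R := K) g ⊗ₜ[K] Y))
      = Coalgebra.counit (R := K) g * counitA K B H counitB Y := by
  have hℓc : ∀ (x : H) (b : B), counitB (ℓ (x ⊗ₜ[K] b))
      = Coalgebra.counit (R := K) x * counitB b := by
    intro x b
    simpa using LinearMap.congr_fun hℓ_counit (x ⊗ₜ[K] b)
  induction Y using TensorProduct.induction_on with
  | zero => simp
  | add Y1 Y2 h1 h2 => simp only [TensorProduct.tmul_add, map_add, h1, h2, mul_add]
  | tmul b' h' =>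
    have rg := Coalgebra.Repr.arbitrary K g
    rw [actAux_comul_repr ℓ rg, map_sum]
    have : ∀ i ∈ rg.index,
        counitA K B H counitB (ℓ (rg.left i ⊗ₜ[K] b') ⊗ₜ[K] (rg.right i * h'))
          = (Coalgebra.counit (R := K) (rg.left i) * Coalgebra.counit (R := K) (rg.right i))
              * (counitB b' * Coalgebra.counit (R := K) h') := by
      intro i _
      rw [counitA_tmul, hℓc, Bialgebra.counit_mul]
      ring
    rw [Finset.sum_congr rfl this, ← Finset.sum_mul, repr_counit_counit rg, counitA_tmul]
/-- A representation of `comul (ΦB b * h)` built from representations of `b` and `h`. -/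
noncomputable def reprMul [Coalgebra K B] (ΦB : B →ₗ[K] H)
    (hΦ_comul : Coalgebra.comul ∘ₗ ΦB
      = TensorProduct.map ΦB ΦB ∘ₗ (Coalgebra.comul (R := K) (A := B)))
    {b : B} {h : H} {ι κ : Type*} (rb : Coalgebra.Repr K b ι) (rh : Coalgebra.Repr K h κ) :
    Coalgebra.Repr K (ΦB b * h) (ι × κ) where
  index := rb.index ×ˢ rh.index
  left := fun p => ΦB (rb.left p.1) * rh.left p.2
  right := fun p => ΦB (rb.right p.1) * rh.right p.2
  eq := by
    have hb := LinearMap.congr_fun hΦ_comul b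
    simp only [LinearMap.coe_comp, Function.comp_apply] at hb
    rw [Finset.sum_product]
    have : Coalgebra.comul (R := K) (ΦB b * h)
        = (∑ i ∈ rb.index, ΦB (rb.left i) ⊗ₜ[K] ΦB (rb.right i))
            * (∑ j ∈ rh.index, rh.left j ⊗ₜ[K] rh.right j) := by
      rw [Bialgebra.comul_mul, hb, ← rb.eq, ← rh.eq, map_sum]
      simp only [TensorProduct.map_tmul]
    rw [this, Finset.sum_mul_sum]
    refine Finset.sum_congr rfl fun i _ => Finset.sum_congr rfl fun j _ => ?_
    rw [Algebra.TensorProduct.tmul_mul_tmul]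

lemma right_antipodeA [Coalgebra K B] (ΦB : B →ₗ[K] H) (ℓ : H ⊗[K] B →ₗ[K] B)
    (oneB : B)
    (hΦ_comul : Coalgebra.comul ∘ₗ ΦB
      = TensorProduct.map ΦB ΦB ∘ₗ (Coalgebra.comul (R := K) (A := B)))
    (hΦ_counit : Coalgebra.counit ∘ₗ ΦB = (Coalgebra.counit (R := K) (A := B)))
    (hℓ_oneB : ∀ x : H, ℓ (x ⊗ₜ[K] oneB) = Coalgebra.counit (R := K) x • oneB)
    (X : B ⊗[K] H) :
    vdA K B H ΦB ℓ
        ((TensorProduct.map LinearMap.id (SA K B H ΦB oneB))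
          (comulA K B H (Coalgebra.comul (R := K)) X))
      = counitA K B H (Coalgebra.counit (R := K)) X • (oneB ⊗ₜ[K] (1 : H)) := by
  induction X using TensorProduct.induction_on with
  | zero => simp
  | add X1 X2 h1 h2 => simp only [map_add, h1, h2, add_smul]
  | tmul b h =>
    classical
    have rb := Coalgebra.Repr.arbitrary K b
    have rh := Coalgebra.Repr.arbitrary K h
    have hεb := LinearMap.congr_fun hΦ_counit b
    simp only [LinearMap.coe_comp, Function.comp_apply] at hεb
    rw [comulA_repr rb rh]
    simp only [map_sum, TensorProduct.map_tmul, LinearMap.id_coe, id_eq]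
    have : ∀ i ∈ rb.index, ∀ j ∈ rh.index,
        vdA K B H ΦB ℓ ((rb.left i ⊗ₜ[K] rh.left j) ⊗ₜ[K]
            SA K B H ΦB oneB (rb.right i ⊗ₜ[K] rh.right j))
          = oneB ⊗ₜ[K] ((ΦB (rb.left i) * rh.left j) *
              HopfAlgebra.antipode (R := K) (ΦB (rb.right i) * rh.right j)) := by
      intro i _ j _
      rw [SA_apply, PhiA_tmul, vdA_apply, PhiA_tmul, actAux_oneB ℓ oneB hℓ_oneB]
    rw [Finset.sum_congr rfl fun i hi => Finset.sum_congr rfl fun j hj => this i hi j hj]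
    rw [Finset.sum_congr rfl fun i (_ : i ∈ rb.index) =>
      (TensorProduct.tmul_sum _ _ _).symm, ← TensorProduct.tmul_sum]
    rw [← Finset.sum_product' (f := fun i j => (ΦB (rb.left i) * rh.left j) *
      HopfAlgebra.antipode (R := K) (ΦB (rb.right i) * rh.right j))]
    have hsum := HopfAlgebra.sum_mul_antipode_eq_smul (R := K) (reprMul ΦB hΦ_comul rb rh)
    simp only [reprMul] at hsum
    rw [hsum, Bialgebra.counit_mul, hεb, counitA_tmul, TensorProduct.tmul_smul]
  
lemma left_antipodeA [Coalgebra K B] (ΦB : B →ₗ[K] H) (oneB : B)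
    (hΦ_comul : Coalgebra.comul ∘ₗ ΦB
      = TensorProduct.map ΦB ΦB ∘ₗ (Coalgebra.comul (R := K) (A := B)))
    (hΦ_counit : Coalgebra.counit ∘ₗ ΦB = (Coalgebra.counit (R := K) (A := B)))
    (X : B ⊗[K] H) :
    dvA K B H ΦB
        ((TensorProduct.map (SA K B H ΦB oneB) LinearMap.id)
          (comulA K B H (Coalgebra.comul (R := K)) X))
      = counitA K B H (Coalgebra.counit (R := K)) X • (oneB ⊗ₜ[K] (1 : H)) := by
  induction X using TensorProduct.induction_on with
  | zero => simp
  | add X1 X2 h1 h2 => simp only [map_add, h1, h2, add_smul]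
  | tmul b h =>
    classical
    have rb := Coalgebra.Repr.arbitrary K b
    have rh := Coalgebra.Repr.arbitrary K h
    have hεb := LinearMap.congr_fun hΦ_counit b
    simp only [LinearMap.coe_comp, Function.comp_apply] at hεb
    rw [comulA_repr rb rh]
    simp only [map_sum, TensorProduct.map_tmul, LinearMap.id_coe, id_eq]
    have : ∀ i ∈ rb.index, ∀ j ∈ rh.index,
        dvA K B H ΦB ((SA K B H ΦB oneB (rb.left i ⊗ₜ[K] rh.left j)) ⊗ₜ[K]
            (rb.right i ⊗ₜ[K] rh.right j))
          = oneB ⊗ₜ[K] (HopfAlgebra.antipode (R := K) (ΦB (rb.left i) * rh.left j) *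
              (ΦB (rb.right i) * rh.right j)) := by
      intro i _ j _
      rw [SA_apply, PhiA_tmul, dvA_apply, PhiA_tmul]
    rw [Finset.sum_congr rfl fun i hi => Finset.sum_congr rfl fun j hj => this i hi j hj]
    rw [Finset.sum_congr rfl fun i (_ : i ∈ rb.index) =>
      (TensorProduct.tmul_sum _ _ _).symm, ← TensorProduct.tmul_sum]
    rw [← Finset.sum_product' (f := fun i j => HopfAlgebra.antipode (R := K)
      (ΦB (rb.left i) * rh.left j) * (ΦB (rb.right i) * rh.right j))]
    have hsum := HopfAlgebra.sum_antipode_mul_eq_smul (R := K) (reprMul ΦB hΦ_comul rb rh)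
    simp only [reprMul] at hsum
    rw [hsum, Bialgebra.counit_mul, hεb, counitA_tmul, TensorProduct.tmul_smul]
lemma swap_mid (x z : H) (u : H ⊗[K] H) :
    (tensorTensorTensorComm K H H H H)
        ((TensorProduct.assoc K H H (H ⊗[K] H)).symm
          (x ⊗ₜ[K] (TensorProduct.assoc K H H H (u ⊗ₜ[K] z))))
      = (TensorProduct.assoc K H H (H ⊗[K] H)).symm
          (x ⊗ₜ[K] (TensorProduct.assoc K H H H ((TensorProduct.comm K H H u) ⊗ₜ[K] z))) := by
  induction u using TensorProduct.induction_on with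
  | zero => simp
  | add u1 u2 h1 h2 =>
      simp only [TensorProduct.add_tmul, map_add, TensorProduct.tmul_add, h1, h2]
  | tmul c1 c2 => simp

lemma hT_canon (g : H) {ι κ : Type*} (rg : Coalgebra.Repr K g ι)
    (rr : ∀ i : ι, Coalgebra.Repr K (rg.right i) κ) :
    TensorProduct.map (Coalgebra.comul) (Coalgebra.comul) (Coalgebra.comul (R := K) g)
      = ∑ i ∈ rg.index, ∑ k ∈ (rr i).index,
          (TensorProduct.assoc K H H (H ⊗[K] H)).symm
            (rg.left i ⊗ₜ[K] (TensorProduct.assoc K H H H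
              ((Coalgebra.comul (R := K) ((rr i).left k)) ⊗ₜ[K] (rr i).right k))) := by
  classical
  have rl : ∀ i : ι, Coalgebra.Repr K (rg.left i) (H × H) := fun i =>
    Coalgebra.Repr.arbitrary K (rg.left i)
  set L : H ⊗[K] (H ⊗[K] H) →ₗ[K] (H ⊗[K] H) ⊗[K] (H ⊗[K] H) :=
    ((Coalgebra.comul (R := K) (A := H)).lTensor (H ⊗[K] H)) ∘ₗ
      (TensorProduct.assoc K H H H).symm.toLinearMap with hLdef
  have stepA : TensorProduct.map (Coalgebra.comul) (Coalgebra.comul) (Coalgebra.comul (R := K) g)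
      = L (∑ i ∈ rg.index, ∑ j ∈ (rl i).index,
          (rl i).left j ⊗ₜ[K] ((rl i).right j ⊗ₜ[K] rg.right i)) := by
    rw [← rg.eq, map_sum, map_sum]
    refine Finset.sum_congr rfl fun i _ => ?_
    rw [TensorProduct.map_tmul, ← (rl i).eq, TensorProduct.sum_tmul, map_sum]
    refine Finset.sum_congr rfl fun j _ => ?_
    simp [hLdef]
  have stepB := Coalgebra.sum_tmul_tmul_eq rg rl rr
  rw [stepA, stepB, map_sum]
  refine Finset.sum_congr rfl fun i _ => ?_
  have h1 : L (∑ j ∈ (rr i).index,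
        rg.left i ⊗ₜ[K] ((rr i).left j ⊗ₜ[K] (rr i).right j))
      = (TensorProduct.assoc K H H (H ⊗[K] H)).symm
          (rg.left i ⊗ₜ[K] (LinearMap.lTensor H (Coalgebra.comul (R := K))
            (∑ j ∈ (rr i).index, (rr i).left j ⊗ₜ[K] (rr i).right j))) := by
    rw [map_sum, map_sum, TensorProduct.tmul_sum, map_sum]
    refine Finset.sum_congr rfl fun k _ => ?_
    simp [hLdef]
  have h2 : LinearMap.lTensor H (Coalgebra.comul (R := K))
        (∑ j ∈ (rr i).index, (rr i).left j ⊗ₜ[K] (rr i).right j)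
      = TensorProduct.assoc K H H H (LinearMap.rTensor H (Coalgebra.comul (R := K))
          (∑ j ∈ (rr i).index, (rr i).left j ⊗ₜ[K] (rr i).right j)) := by
    rw [(rr i).eq]
    exact (Coalgebra.coassoc_apply _).symm
  rw [h1, h2, map_sum, map_sum, TensorProduct.tmul_sum, map_sum]
  refine Finset.sum_congr rfl fun k _ => ?_
  simp

lemma cocomm_swap
    (cocommH : ∀ u : H, (TensorProduct.comm K H H) (Coalgebra.comul u)
      = Coalgebra.comul (R := K) u) (g : H) :
    (tensorTensorTensorComm K H H H H)
        (TensorProduct.map (Coalgebra.comul) (Coalgebra.comul) (Coalgebra.comul (R := K) g))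
      = TensorProduct.map (Coalgebra.comul) (Coalgebra.comul) (Coalgebra.comul (R := K) g) := by
  classical
  have rg := Coalgebra.Repr.arbitrary K g
  have rr : ∀ i : H × H, Coalgebra.Repr K (rg.right i) (H × H) := fun i =>
    Coalgebra.Repr.arbitrary K (rg.right i)
  rw [hT_canon g rg rr]
  simp only [map_sum]
  refine Finset.sum_congr rfl fun i _ => Finset.sum_congr rfl fun k _ => ?_
  rw [swap_mid, cocommH]
/-- Auxiliary double-action map. -/
noncomputable def FF (ℓ : H ⊗[K] B →ₗ[K] B) :
    ((H ⊗[K] H) ⊗[K] (H ⊗[K] H)) ⊗[K] ((B ⊗[K] H) ⊗[K] (B ⊗[K] H)) →ₗ[K]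
      (B ⊗[K] H) ⊗[K] (B ⊗[K] H) :=
  TensorProduct.map (actAux ℓ) (actAux ℓ) ∘ₗ
    (tensorTensorTensorComm K (H ⊗[K] H) (H ⊗[K] H) (B ⊗[K] H) (B ⊗[K] H)).toLinearMap

lemma FF_tmul (ℓ : H ⊗[K] B →ₗ[K] B) (u v : H ⊗[K] H) (Y1 Y2 : B ⊗[K] H) :
    FF ℓ ((u ⊗ₜ[K] v) ⊗ₜ[K] (Y1 ⊗ₜ[K] Y2))
      = actAux ℓ (u ⊗ₜ[K] Y1) ⊗ₜ[K] actAux ℓ (v ⊗ₜ[K] Y2) := by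
  simp [FF]

lemma vd_shuffle (ℓ : H ⊗[K] B →ₗ[K] B) (u1 u2 : H ⊗[K] H) (p : B ⊗[K] B) (q : H ⊗[K] H) :
    (tensorTensorTensorComm K B B H H)
        ((TensorProduct.map ℓ ℓ ((tensorTensorTensorComm K H H B B) (u1 ⊗ₜ[K] p)))
          ⊗ₜ[K] (u2 * q))
      = FF ℓ (((tensorTensorTensorComm K H H H H) (u1 ⊗ₜ[K] u2)) ⊗ₜ[K]
          ((tensorTensorTensorComm K B B H H) (p ⊗ₜ[K] q))) := by
  induction u1 using TensorProduct.induction_on with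
  | zero => simp [TensorProduct.zero_tmul]
  | add a1 a2 h1 h2 => simp only [TensorProduct.add_tmul, map_add, h1, h2]
  | tmul x1 x2 =>
    induction p using TensorProduct.induction_on with
    | zero => simp [TensorProduct.zero_tmul, TensorProduct.tmul_zero]
    | add p1 p2 h1 h2 =>
        simp only [TensorProduct.tmul_add, TensorProduct.add_tmul, map_add, h1, h2]
    | tmul b1 b2 =>
      induction u2 using TensorProduct.induction_on with
      | zero => simp [TensorProduct.zero_tmul, TensorProduct.tmul_zero]
      | add a1 a2 h1 h2 =>
          simp only [TensorProduct.add_tmul, TensorProduct.tmul_add, map_add, add_mul,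
            h1, h2]
      | tmul y1 y2 =>
        induction q using TensorProduct.induction_on with
        | zero => simp [TensorProduct.tmul_zero]
        | add q1 q2 h1 h2 =>
            simp only [TensorProduct.tmul_add, map_add, mul_add, h1, h2]
        | tmul k1 k2 =>
          simp only [tensorTensorTensorComm_tmul, TensorProduct.map_tmul,
            Algebra.TensorProduct.tmul_mul_tmul, FF_tmul, actAux_tmul]

lemma Lvd [Coalgebra K B] (ℓ : H ⊗[K] B →ₗ[K] B)
    (hℓ_comul : (Coalgebra.comul (R := K) (A := B)) ∘ₗ ℓ = TensorProduct.map ℓ ℓ ∘ₗ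
        (tensorTensorTensorComm K H H B B).toLinearMap ∘ₗ
        TensorProduct.map Coalgebra.comul (Coalgebra.comul (R := K) (A := B)))
    (w : H ⊗[K] H) (b' : B) (h' : H) :
    comulA K B H (Coalgebra.comul (R := K)) (actAux ℓ (w ⊗ₜ[K] (b' ⊗ₜ[K] h')))
      = FF ℓ (((tensorTensorTensorComm K H H H H)
            (TensorProduct.map (Coalgebra.comul) (Coalgebra.comul) w)) ⊗ₜ[K]
          comulA K B H (Coalgebra.comul (R := K)) (b' ⊗ₜ[K] h')) := by
  induction w using TensorProduct.induction_on with
  | zero => simp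
  | add w1 w2 h1 h2 =>
      simp only [TensorProduct.add_tmul, map_add, h1, h2]
  | tmul g1 g2 =>
    have hc := LinearMap.congr_fun hℓ_comul (g1 ⊗ₜ[K] b')
    simp only [LinearMap.coe_comp, Function.comp_apply, LinearEquiv.coe_coe,
      TensorProduct.map_tmul] at hc
    rw [actAux_tmul, comulA_tmul, hc, Bialgebra.comul_mul, vd_shuffle,
      TensorProduct.map_tmul, comulA_tmul]

lemma vd_F (ΦB : B →ₗ[K] H) (ℓ : H ⊗[K] B →ₗ[K] B) (w w' : (B ⊗[K] H) ⊗[K] (B ⊗[K] H)) :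
    TensorProduct.map (vdA K B H ΦB ℓ) (vdA K B H ΦB ℓ)
        ((tensorTensorTensorComm K (B ⊗[K] H) (B ⊗[K] H) (B ⊗[K] H) (B ⊗[K] H))
          (w ⊗ₜ[K] w'))
      = FF ℓ ((TensorProduct.map
            ((Coalgebra.comul (R := K) (A := H)) ∘ₗ PhiA K B H ΦB)
            ((Coalgebra.comul (R := K) (A := H)) ∘ₗ PhiA K B H ΦB) w) ⊗ₜ[K] w') := by
  induction w using TensorProduct.induction_on with
  | zero => simp [TensorProduct.zero_tmul]
  | add w1 w2 h1 h2 => simp only [TensorProduct.add_tmul, map_add, h1, h2]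
  | tmul X1 X2 =>
    induction w' using TensorProduct.induction_on with
    | zero => simp [TensorProduct.tmul_zero]
    | add w1 w2 h1 h2 => simp only [TensorProduct.tmul_add, map_add, h1, h2]
    | tmul Y1 Y2 =>
      simp only [tensorTensorTensorComm_tmul, TensorProduct.map_tmul, LinearMap.coe_comp,
        Function.comp_apply, FF_tmul, vdA_apply]

lemma comul_vdA [Coalgebra K B] (ΦB : B →ₗ[K] H) (ℓ : H ⊗[K] B →ₗ[K] B)
    (hΦ_comul : Coalgebra.comul ∘ₗ ΦB
      = TensorProduct.map ΦB ΦB ∘ₗ (Coalgebra.comul (R := K) (A := B)))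
    (hℓ_comul : (Coalgebra.comul (R := K) (A := B)) ∘ₗ ℓ = TensorProduct.map ℓ ℓ ∘ₗ
        (tensorTensorTensorComm K H H B B).toLinearMap ∘ₗ
        TensorProduct.map Coalgebra.comul (Coalgebra.comul (R := K) (A := B)))
    (cocommH : ∀ u : H, (TensorProduct.comm K H H) (Coalgebra.comul u)
      = Coalgebra.comul (R := K) u) :
    comulA K B H (Coalgebra.comul (R := K)) ∘ₗ vdA K B H ΦB ℓ
      = TensorProduct.map (vdA K B H ΦB ℓ) (vdA K B H ΦB ℓ) ∘ₗ
          comul2 K (B ⊗[K] H) (comulA K B H (Coalgebra.comul (R := K))) := by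
  refine TensorProduct.ext' fun X Y => ?_
  simp only [LinearMap.coe_comp, Function.comp_apply, comul2, LinearEquiv.coe_coe,
    TensorProduct.map_tmul]
  have hkey : TensorProduct.map
        ((Coalgebra.comul (R := K) (A := H)) ∘ₗ PhiA K B H ΦB)
        ((Coalgebra.comul (R := K) (A := H)) ∘ₗ PhiA K B H ΦB)
        (comulA K B H (Coalgebra.comul (R := K)) X)
      = TensorProduct.map (Coalgebra.comul) (Coalgebra.comul)
          (Coalgebra.comul (R := K) (PhiA K B H ΦB X)) := by
    rw [TensorProduct.map_comp, LinearMap.coe_comp, Function.comp_apply,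
      Phi_comulA (Coalgebra.comul (R := K)) ΦB hΦ_comul]
  induction Y using TensorProduct.induction_on with
  | zero => simp
  | add Y1 Y2 h1 h2 =>
      simp only [TensorProduct.tmul_add, map_add, h1, h2]
  | tmul b' h' =>
    rw [vdA_apply, Lvd ℓ hℓ_comul, cocomm_swap cocommH, vd_F, hkey]

lemma counit_vdA [Coalgebra K B] (ΦB : B →ₗ[K] H) (ℓ : H ⊗[K] B →ₗ[K] B)
    (hΦ_counit : Coalgebra.counit ∘ₗ ΦB = (Coalgebra.counit (R := K) (A := B)))
    (hℓ_counit : (Coalgebra.counit (R := K) (A := B)) ∘ₗ ℓ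
      = LinearMap.mul' K K ∘ₗ TensorProduct.map Coalgebra.counit
          (Coalgebra.counit (R := K) (A := B))) :
    counitA K B H (Coalgebra.counit (R := K)) ∘ₗ vdA K B H ΦB ℓ
      = counit2 K (B ⊗[K] H) (counitA K B H (Coalgebra.counit (R := K))) := by
  refine TensorProduct.ext' fun X Y => ?_
  simp only [LinearMap.coe_comp, Function.comp_apply, counit2, TensorProduct.map_tmul,
    LinearMap.mul'_apply]
  rw [vdA_apply, counit_act (Coalgebra.counit (R := K)) ℓ hℓ_counit,
    Phi_counitA (Coalgebra.counit (R := K)) ΦB hΦ_counit]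

lemma counit_dvA [Coalgebra K B] (ΦB : B →ₗ[K] H)
    (hΦ_counit : Coalgebra.counit ∘ₗ ΦB = (Coalgebra.counit (R := K) (A := B))) :
    counitA K B H (Coalgebra.counit (R := K)) ∘ₗ dvA K B H ΦB
      = counit2 K (B ⊗[K] H) (counitA K B H (Coalgebra.counit (R := K))) := by
  refine TensorProduct.ext' fun X Y => ?_
  simp only [LinearMap.coe_comp, Function.comp_apply, counit2, TensorProduct.map_tmul,
    LinearMap.mul'_apply]
  induction X using TensorProduct.induction_on with
  | zero => simp [TensorProduct.zero_tmul]
  | add X1 X2 h1 h2 =>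
      simp only [TensorProduct.add_tmul, map_add, h1, h2, add_mul]
  | tmul b h =>
    rw [dvA_apply, counitA_tmul, counitA_tmul, Bialgebra.counit_mul,
      Phi_counitA (Coalgebra.counit (R := K)) ΦB hΦ_counit, mul_assoc]
end Aux
/-- Let `(B, Φ_B, H, ℓ)` be an augmented rack bialgebra over `K` whose
underlying coalgebra `B` is cocommutative.  On the tensor-product coalgebra `B ⊗ H` define
`Φ(b⊗h) := Φ_B(b)h`, the two products
`(b⊗h) ⊢ (b'⊗h') := Σ ((Φ_B(b)h)⁽¹⁾.b') ⊗ ((Φ_B(b)h)⁽²⁾h')` and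
`(b⊗h) ⊣ (b'⊗h') := b ⊗ (h·Φ_B(b')h')`, and `S(b⊗h) := 1_B ⊗ S_H(Φ_B(b)h)`.
Then `(B⊗H, Δ_{B⊗H}, ε_B⊗ε_H, 1_B⊗1_H, ⊢, ⊣, S)` is a cocommutative Hopf dialgebra.
Moreover, identifying `x ∈ Prim(B)` with `x⊗1_H` and `ξ ∈ Prim(H)` with `1_B⊗ξ`, the
Leibniz bracket `[u,v] := u ⊢ v - v ⊣ u` on `Prim(B⊗H) = Prim(B) ⊕ Prim(H)` is given by
`[x+ξ, y+η] = ([x,y] + ξ.y) + ([Φ_B(x),η] + [ξ,η])` where `[x,y] = Φ_B(x).y` and the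
brackets in `H` are commutators. -/
theorem augmented_rack_bialgebra_gives_hopf_dialgebra
    (K : Type*) [CommRing K] [Algebra ℚ K]
    (B : Type*) [AddCommGroup B] [Module K B]
    (comulB : B →ₗ[K] B ⊗[K] B) (counitB : B →ₗ[K] K) (oneB : B)
    (hB : IsC3Coalgebra K B comulB counitB oneB)
    (cocommB : ∀ b : B, (TensorProduct.comm K B B) (comulB b) = comulB b)
    (H : Type*) [Ring H] [HopfAlgebra K H]
    (cocommH : ∀ h : H,
      (TensorProduct.comm K H H) (Coalgebra.comul h) = Coalgebra.comul (R := K) h)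
    (ΦB : B →ₗ[K] H)
    (hΦ_comul : Coalgebra.comul ∘ₗ ΦB = TensorProduct.map ΦB ΦB ∘ₗ comulB)
    (hΦ_counit : Coalgebra.counit ∘ₗ ΦB = counitB)
    (hΦ_one : ΦB oneB = 1)
    (ℓ : H ⊗[K] B →ₗ[K] B)
    (hℓ_one : ∀ b : B, ℓ ((1 : H) ⊗ₜ[K] b) = b)
    (hℓ_mul : ∀ (h h' : H) (b : B), ℓ ((h * h') ⊗ₜ[K] b) = ℓ (h ⊗ₜ[K] ℓ (h' ⊗ₜ[K] b)))
    (hℓ_comul : comulB ∘ₗ ℓ = TensorProduct.map ℓ ℓ ∘ₗ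
        (tensorTensorTensorComm K H H B B).toLinearMap ∘ₗ
        TensorProduct.map Coalgebra.comul comulB)
    (hℓ_counit : counitB ∘ₗ ℓ
        = LinearMap.mul' K K ∘ₗ TensorProduct.map Coalgebra.counit counitB)
    (hℓ_oneB : ∀ h : H, ℓ (h ⊗ₜ[K] oneB) = Coalgebra.counit (R := K) h • oneB)
    (hΦ_equiv : ΦB ∘ₗ ℓ = adjointMap K H ∘ₗ TensorProduct.map LinearMap.id ΦB) :
    IsHopfDialgebra K (B ⊗[K] H) (comulA K B H comulB) (counitA K B H counitB)
      (oneB ⊗ₜ[K] (1 : H)) (vdA K B H ΦB ℓ) (dvA K B H ΦB) (SA K B H ΦB oneB) ∧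
    (∀ (x y : B) (ξ η : H),
      IsPrimitive K B comulB oneB x → IsPrimitive K B comulB oneB y →
      Coalgebra.comul ξ = ξ ⊗ₜ[K] (1 : H) + (1 : H) ⊗ₜ[K] ξ →
      Coalgebra.comul η = η ⊗ₜ[K] (1 : H) + (1 : H) ⊗ₜ[K] η →
      vdA K B H ΦB ℓ ((x ⊗ₜ[K] (1 : H) + oneB ⊗ₜ[K] ξ) ⊗ₜ[K] (y ⊗ₜ[K] (1 : H) + oneB ⊗ₜ[K] η))
        - dvA K B H ΦB ((y ⊗ₜ[K] (1 : H) + oneB ⊗ₜ[K] η) ⊗ₜ[K] (x ⊗ₜ[K] (1 : H) + oneB ⊗ₜ[K] ξ))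
      = (ℓ (ΦB x ⊗ₜ[K] y) + ℓ (ξ ⊗ₜ[K] y)) ⊗ₜ[K] (1 : H)
        + oneB ⊗ₜ[K] ((ΦB x * η - η * ΦB x) + (ξ * η - η * ξ))) := by
  classical
  letI instB : Coalgebra K B := coalgOfC3 comulB counitB oneB hB
  -- counits of primitives vanish
  have prim_counitB : ∀ x : B, IsPrimitive K B comulB oneB x → counitB x = 0 := by
    intro x hx
    have h1 := Coalgebra.rTensor_counit_comul (R := K) x
    rw [show Coalgebra.comul (R := K) x = comulB x from rfl, hx] at h1
    rw [map_add, LinearMap.rTensor_tmul, LinearMap.rTensor_tmul] at h1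
    have h2 : (counitB x) ⊗ₜ[K] oneB = (0 : K ⊗[K] B) := by
      have : (counitB x) ⊗ₜ[K] oneB + (counitB oneB) ⊗ₜ[K] x = 1 ⊗ₜ[K] x := h1
      rw [hB.counit_one] at this
      exact by linear_combination (norm := abel) this
    have h3 := congrArg (TensorProduct.lid K B) h2
    simp only [TensorProduct.lid_tmul, map_zero] at h3
    have h4 := congrArg counitB h3
    simp only [map_smul, map_zero, smul_eq_mul, hB.counit_one, mul_one] at h4
    exact h4
  have prim_counitH : ∀ ξ : H, Coalgebra.comul ξ = ξ ⊗ₜ[K] (1 : H) + (1 : H) ⊗ₜ[K] ξ →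
      Coalgebra.counit (R := K) ξ = 0 := by
    intro ξ hξ
    have h1 := Coalgebra.rTensor_counit_comul (R := K) ξ
    rw [hξ, map_add, LinearMap.rTensor_tmul, LinearMap.rTensor_tmul] at h1
    have h2 : (Coalgebra.counit (R := K) ξ) ⊗ₜ[K] (1 : H) = (0 : K ⊗[K] H) := by
      have : (Coalgebra.counit (R := K) ξ) ⊗ₜ[K] (1 : H)
          + (Coalgebra.counit (R := K) (1 : H)) ⊗ₜ[K] ξ = 1 ⊗ₜ[K] ξ := h1
      rw [Bialgebra.counit_one] at this
      exact by linear_combination (norm := abel) this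
    have h3 := congrArg (TensorProduct.lid K H) h2
    simp only [TensorProduct.lid_tmul, map_zero] at h3
    have h4 := congrArg (Coalgebra.counit (R := K)) h3
    simp only [map_smul, map_zero, smul_eq_mul, Bialgebra.counit_one, mul_one] at h4
    exact h4
  constructor
  · refine ⟨?_, ?_, ?_, ?_, ?_, ?_, ?_, ?_, ?_, ?_, ?_, ?_, ?_, ?_, ?_, ?_⟩
    · -- isC3
      exact isC3A oneB hB.comul_one hB.counit_one
    · -- cocomm
      exact cocommA cocommB cocommH
    · -- comul_vd
      exact comul_vdA ΦB ℓ hΦ_comul hℓ_comul cocommH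
    · -- counit_vd
      exact counit_vdA ΦB ℓ hΦ_counit hℓ_counit
    · -- comul_dv
      exact comul_dvA ΦB hΦ_comul
    · -- counit_dv
      exact counit_dvA ΦB hΦ_counit
    · -- vd_assoc
      intro a b c
      rw [vdA_apply (X := vdA K B H ΦB ℓ (a ⊗ₜ[K] b)) (Y := c), Phi_vd ΦB ℓ hΦ_equiv,
        Bialgebra.comul_mul, actAux_mul ℓ hℓ_mul, vdA_apply (X := a),
        vdA_apply (X := b)]
    · -- dv_assoc
      intro a b c
      rw [dvA_apply' (W := dvA K B H ΦB (a ⊗ₜ[K] b)), dvA_apply', mulRight_map_comp,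
        dvA_apply' (Y := dvA K B H ΦB (b ⊗ₜ[K] c)), Phi_dv]
    · -- di_ax1
      intro a b c
      rw [vdA_apply (X := vdA K B H ΦB ℓ (a ⊗ₜ[K] b)) (Y := c),
        vdA_apply (X := dvA K B H ΦB (a ⊗ₜ[K] b)) (Y := c), Phi_vd ΦB ℓ hΦ_equiv, Phi_dv]
    · -- di_ax2
      intro a b c
      rw [dvA_apply' (Y := dvA K B H ΦB (b ⊗ₜ[K] c)),
        dvA_apply' (Y := vdA K B H ΦB ℓ (b ⊗ₜ[K] c)), Phi_dv, Phi_vd ΦB ℓ hΦ_equiv]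
    · -- di_ax3
      intro a b c
      rw [dvA_apply' (W := vdA K B H ΦB ℓ (a ⊗ₜ[K] b)), vdA_apply, act_mulRight,
        ← dvA_apply', vdA_apply]
    · -- one_vd
      intro a
      rw [vdA_apply, PhiA_tmul, hΦ_one, one_mul, Bialgebra.comul_one,
        actAux_one ℓ hℓ_one]
    · -- dv_one
      intro a
      rw [dvA_apply', PhiA_tmul, hΦ_one, one_mul, LinearMap.mulRight_one]
      simp
    · -- balanced
      intro a
      rw [vdA_apply, actAux_oneB ℓ oneB hℓ_oneB, mul_one, dvA_apply, one_mul]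
    · -- right_antipode_vd
      intro a
      exact right_antipodeA ΦB ℓ oneB hΦ_comul hΦ_counit hℓ_oneB a
    · -- left_antipode_dv
      intro a
      exact left_antipodeA ΦB oneB hΦ_comul hΦ_counit a
  · intro x y ξ η hx hy hξ hη
    have hεx : counitB x = 0 := prim_counitB x hx
    have hεξ : Coalgebra.counit (R := K) ξ = 0 := prim_counitH ξ hξ
    have hΔΦx : Coalgebra.comul (R := K) (ΦB x) = ΦB x ⊗ₜ[K] 1 + 1 ⊗ₜ[K] ΦB x := by
      have h1 := LinearMap.congr_fun hΦ_comul x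
      simp only [LinearMap.coe_comp, Function.comp_apply] at h1
      rw [h1, hx, map_add, TensorProduct.map_tmul, TensorProduct.map_tmul, hΦ_one]
    have hεΦx : Coalgebra.counit (R := K) (ΦB x) = 0 := by
      have h1 := LinearMap.congr_fun hΦ_counit x
      simp only [LinearMap.coe_comp, Function.comp_apply] at h1
      rw [h1, hεx]
    -- expand the four ⊢ terms and four ⊣ terms
    rw [TensorProduct.add_tmul, TensorProduct.tmul_add, TensorProduct.tmul_add,
      map_add, map_add, map_add,
      TensorProduct.add_tmul, TensorProduct.tmul_add, TensorProduct.tmul_add,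
      map_add, map_add, map_add]
    have T11 : vdA K B H ΦB ℓ ((x ⊗ₜ[K] (1 : H)) ⊗ₜ[K] (y ⊗ₜ[K] (1 : H)))
        = ℓ (ΦB x ⊗ₜ[K] y) ⊗ₜ[K] (1 : H) + y ⊗ₜ[K] ΦB x := by
      rw [vdA_apply, PhiA_tmul, mul_one, hΔΦx, TensorProduct.add_tmul, map_add,
        actAux_tmul, actAux_tmul, hℓ_one, mul_one, mul_one]
    have T12 : vdA K B H ΦB ℓ ((x ⊗ₜ[K] (1 : H)) ⊗ₜ[K] (oneB ⊗ₜ[K] η))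
        = oneB ⊗ₜ[K] (ΦB x * η) := by
      rw [vdA_apply, PhiA_tmul, mul_one, hΔΦx, TensorProduct.add_tmul, map_add,
        actAux_tmul, actAux_tmul, hℓ_one, hℓ_oneB, hεΦx, zero_smul,
        TensorProduct.zero_tmul, zero_add]
    have T21 : vdA K B H ΦB ℓ ((oneB ⊗ₜ[K] ξ) ⊗ₜ[K] (y ⊗ₜ[K] (1 : H)))
        = ℓ (ξ ⊗ₜ[K] y) ⊗ₜ[K] (1 : H) + y ⊗ₜ[K] ξ := by
      rw [vdA_apply, PhiA_tmul, hΦ_one, one_mul, hξ, TensorProduct.add_tmul, map_add,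
        actAux_tmul, actAux_tmul, hℓ_one, mul_one, mul_one]
    have T22 : vdA K B H ΦB ℓ ((oneB ⊗ₜ[K] ξ) ⊗ₜ[K] (oneB ⊗ₜ[K] η))
        = oneB ⊗ₜ[K] (ξ * η) := by
      rw [vdA_apply, PhiA_tmul, hΦ_one, one_mul, hξ, TensorProduct.add_tmul, map_add,
        actAux_tmul, actAux_tmul, hℓ_one, hℓ_oneB, hεξ, zero_smul,
        TensorProduct.zero_tmul, zero_add]
    have D11 : dvA K B H ΦB ((y ⊗ₜ[K] (1 : H)) ⊗ₜ[K] (x ⊗ₜ[K] (1 : H)))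
        = y ⊗ₜ[K] ΦB x := by
      rw [dvA_apply, PhiA_tmul, mul_one, one_mul]
    have D12 : dvA K B H ΦB ((y ⊗ₜ[K] (1 : H)) ⊗ₜ[K] (oneB ⊗ₜ[K] ξ))
        = y ⊗ₜ[K] ξ := by
      rw [dvA_apply, PhiA_tmul, hΦ_one, one_mul, one_mul]
    have D21 : dvA K B H ΦB ((oneB ⊗ₜ[K] η) ⊗ₜ[K] (x ⊗ₜ[K] (1 : H)))
        = oneB ⊗ₜ[K] (η * ΦB x) := by
      rw [dvA_apply, PhiA_tmul, mul_one]
    have D22 : dvA K B H ΦB ((oneB ⊗ₜ[K] η) ⊗ₜ[K] (oneB ⊗ₜ[K] ξ))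
        = oneB ⊗ₜ[K] (η * ξ) := by
      rw [dvA_apply, PhiA_tmul, hΦ_one, one_mul]
    rw [T11, T12, T21, T22, D11, D12, D21, D22]
    simp only [TensorProduct.add_tmul, TensorProduct.tmul_add, TensorProduct.tmul_sub,
      TensorProduct.sub_tmul]
    abel

end RackPaper
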